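/- Let X₁,…,Xₙ be a finite set of points in triangle T, and for each edge eᵢ let X_{eᵢ} be a point of the sample closest to eᵢ. Then the Γ₁-region of the whole sample equals the intersection of the Γ₁-regions of the three edge extrema: Γ₁^r(Xₙ, M) = ⋂_{i=1}^{3} Γ₁^r(X_{eᵢ}, M). -/

import Mathlib

open Set

/-- Distance to the zero set of a nonconstant affine functional is proportional to `|f x|`. -/
lemma infDist_zeroSet_affine {E : Type*} [NormedAddCommGroup E] [InnerProductSpace ℝ E]
    [FiniteDimensional ℝ E] (f : E →ᵃ[ℝ] ℝ) (hf : f.linear ≠ 0) :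
    ∃ c : ℝ, 0 < c ∧ ∀ x : E, Metric.infDist x {z | f z = 0} = |f x| / c := by
  set L := LinearMap.toContinuousLinearMap f.linear with hL
  set u := (InnerProductSpace.toDual ℝ E).symm L with huu
  have key : ∀ z, (inner ℝ u z : ℝ) = f.linear z := fun z =>
    InnerProductSpace.toDual_symm_apply
  have hu : u ≠ 0 := by
    intro h
    apply hf
    ext z
    have := key z
    rw [h, inner_zero_left] at this
    simp [← this]
  have hun : (0:ℝ) < ‖u‖ := norm_pos_iff.mpr hu
  refine ⟨‖u‖, hun, fun x => ?_⟩
  set s : ℝ := f x / ‖u‖ ^ 2 with hs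
  set y₀ : E := x - s • u with hy₀
  have hfy₀ : f y₀ = 0 := by
    have : f y₀ = f x - f.linear (s • u) := by
      have : y₀ = (-(s • u)) +ᵥ x := by simp [hy₀, sub_eq_neg_add, vadd_eq_add]
      rw [this, f.map_vadd]
      simp [vadd_eq_add]
      ring
    rw [this, ← key, inner_smul_right, real_inner_self_eq_norm_sq, hs]
    field_simp
    ring
  have hdist : dist x y₀ = |f x| / ‖u‖ := by
    rw [dist_eq_norm, hy₀]
    simp only [sub_sub_cancel, norm_smul, Real.norm_eq_abs, hs]
    rw [abs_div, abs_of_nonneg (by positivity : (0:ℝ) ≤ ‖u‖ ^ 2)]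
    field_simp
  have hmem : y₀ ∈ {z | f z = 0} := hfy₀
  apply le_antisymm
  · calc Metric.infDist x {z | f z = 0} ≤ dist x y₀ := Metric.infDist_le_dist_of_mem hmem
      _ = |f x| / ‖u‖ := hdist
  · have hb : ∀ y ∈ {z | f z = 0}, |f x| / ‖u‖ ≤ dist x y := by
      intro y hy
      rw [div_le_iff₀ hun]
      have h1 : f x = (inner ℝ u (x - y) : ℝ) := by
        rw [key, ← vsub_eq_sub, f.linearMap_vsub, hy, vsub_eq_sub, sub_zero]
      calc |f x| = |(inner ℝ u (x - y) : ℝ)| := by rw [h1]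
        _ ≤ ‖u‖ * ‖x - y‖ := abs_real_inner_le_norm u (x - y)
        _ = dist x y * ‖u‖ := by rw [dist_eq_norm]; ring
    have h2 : ENNReal.ofReal (|f x| / ‖u‖) ≤ Metric.infEDist x {z | f z = 0} := by
      rw [Metric.le_infEDist]
      intro y hy
      rw [edist_dist]
      exact ENNReal.ofReal_le_ofReal (hb y hy)
    have h3 := ENNReal.toReal_mono (Metric.infEDist_ne_top ⟨y₀, hmem⟩) h2
    rwa [ENNReal.toReal_ofReal (by positivity)] at h3

/-- The closed triangle with vertices given by the affine basis `b` of the plane. -/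
noncomputable def Tri (b : AffineBasis (Fin 3) ℝ (EuclideanSpace ℝ (Fin 2))) :
    Set (EuclideanSpace ℝ (Fin 2)) :=
  convexHull ℝ (Set.range ⇑b)

/-- The `Γ₁`-region of a point `x`: the set of points `z` of the triangle such that
`x ∈ N_PE^r(z, M)`, where `v` is the vertex-region assignment.  Explicitly, for `z` in the
vertex region of `b i` the condition is `d(yᵢ, ℓ(yᵢ,x)) ≤ r · d(yᵢ, ℓ(yᵢ,z))`, i.e. in
barycentric coordinates `1 − b.coord i x ≤ r·(1 − b.coord i z)`. -/
noncomputable def Gamma1 (b : AffineBasis (Fin 3) ℝ (EuclideanSpace ℝ (Fin 2)))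
    (v : EuclideanSpace ℝ (Fin 2) → Fin 3) (r : ℝ)
    (x : EuclideanSpace ℝ (Fin 2)) : Set (EuclideanSpace ℝ (Fin 2)) :=
  {z | z ∈ Tri b ∧ 1 - b.coord (v z) x ≤ r * (1 - b.coord (v z) z)}

/-- Let `X₁,…,Xₙ` be points of the triangle and for each edge `eᵢ` (the zero set of the
`i`-th barycentric coordinate) let `sel i` pick a sample point closest to that edge.
Then the `Γ₁`-region of the whole sample equals the intersection of the `Γ₁`-regions of
the three edge extrema: `Γ₁^r(Xₙ, M) = ⋂_{i=1}^{3} Γ₁^r(X_{eᵢ}, M)`. -/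
theorem Gamma1_sample_eq_inter_edge_extrema
    (b : AffineBasis (Fin 3) ℝ (EuclideanSpace ℝ (Fin 2)))
    (v : EuclideanSpace ℝ (Fin 2) → Fin 3)
    (r : ℝ) (hr : 1 ≤ r)
    (n : ℕ) (X : Fin n → EuclideanSpace ℝ (Fin 2)) (hX : ∀ j, X j ∈ Tri b)
    (sel : Fin 3 → Fin n)
    (hsel : ∀ i j, Metric.infDist (X (sel i)) {z | b.coord i z = 0} ≤
      Metric.infDist (X j) {z | b.coord i z = 0}) :
    (⋂ j, Gamma1 b v r (X j)) = ⋂ i, Gamma1 b v r (X (sel i)) := by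
  -- nonnegativity of barycentric coordinates on the triangle
  have hnn : ∀ (j : Fin n) (i : Fin 3), 0 ≤ b.coord i (X j) := by
    intro j i
    have h := hX j
    rw [Tri, b.convexHull_eq_nonneg_coord] at h
    exact h i
  -- each coordinate functional has a nonzero linear part
  have hlin : ∀ i : Fin 3, (b.coord i).linear ≠ 0 := by
    intro i h
    have h1 : b.coord i (b i) = 1 := by simp
    have h2 : b.coord i (b (i + 1)) = 0 := by
      rw [b.coord_apply]
      simp [(by omega : i ≠ i + 1).symm]
    have h3 : b.coord i (b i) - b.coord i (b (i + 1)) =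
        (b.coord i).linear (b i -ᵥ b (i + 1)) := by
      rw [(b.coord i).linearMap_vsub]; rfl
    rw [h, h1, h2] at h3
    simp at h3
  -- monotonicity : the selected point has the smallest i-th coordinate
  have hmono : ∀ (i : Fin 3) (j : Fin n), b.coord i (X (sel i)) ≤ b.coord i (X j) := by
    intro i j
    obtain ⟨c, hc, hform⟩ := infDist_zeroSet_affine (b.coord i) (hlin i)
    have h := hsel i j
    rw [hform, hform, div_le_div_iff_of_pos_right hc] at h
    rwa [abs_of_nonneg (hnn _ i), abs_of_nonneg (hnn _ i)] at h
  ext z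
  simp only [Set.mem_iInter]
  constructor
  · intro h i
    exact h (sel i)
  · intro h j
    obtain ⟨hzT, hineq⟩ := h (v z)
    refine ⟨hzT, ?_⟩
    have := hmono (v z) j
    linarith
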